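/- arXiv:2010.13589 — 2 statements merged into one kernel-verified Lean document; each statement's English description precedes it below -/
import Mathlib

section
/- In the setting of the cascaded LoS channel with K ≥ 2 reflections, suppose additionally that all array-response vectors h̃_1 ∈ ℂ^N and h̃_2, s̃_{k,1}, s̃_{k,2}, g̃ ∈ ℂ^M have every entry of modulus 1. Choose the IRS phase shifts by co-phasing as in equation (9) (θ_{1,m} = arg((s̃_{1,1})_m) − arg((h̃_2)_m); θ_{k,m} = arg((s̃_{k,1})_m) − arg((s̃_{k−1,2})_m) for 2 ≤ k ≤ K−1; θ_{K,m} = arg((g̃)_m) − arg((s̃_{K−1,2})_m)) and the BS beamformer w = e^{i2πD/λ} h̃_1/‖h̃_1‖. Then the end-to-end channel h = gᴴ Φ_K (∏_{k=K−1}^{1} S_k Φ_k) H_1 w satisfies |h|² = M^{2K} · N · β^{K+1} / (d_0² d_K² ∏_{k=1}^{K−1} d_k²). -/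
open Matrix Finset Complex

lemma exp_arg_of_abs_one {z : ℂ} (hz : ‖z‖ = 1) :
    Complex.exp ((z.arg : ℂ) * Complex.I) = z := by
  have h := Complex.norm_mul_exp_arg_mul_I z
  rwa [hz, Complex.ofReal_one, one_mul] at h

lemma cophase {a b : ℂ} (ha : ‖a‖ = 1) (hb : ‖b‖ = 1) :
    Complex.exp (((a.arg - b.arg : ℝ) : ℂ) * Complex.I) * b = a := by
  have hb0 : b ≠ 0 := by
    intro h; rw [h] at hb; simp at hb
  push_cast
  rw [sub_mul, Complex.exp_sub, exp_arg_of_abs_one ha, exp_arg_of_abs_one hb,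
    div_mul_cancel₀ _ hb0]

lemma conj_mul_self_of_abs_one {z : ℂ} (hz : ‖z‖ = 1) :
    (starRingEnd ℂ) z * z = 1 := by
  rw [mul_comm, Complex.mul_conj, Complex.normSq_eq_norm_sq, hz]
  norm_num


/-- `irsChain S Φ j = (S_j Φ_j)(S_{j-1} Φ_{j-1}) ⋯ (S_1 Φ_1)`, the multi-reflection
matrix product taken in reflection order (the signal passes IRS 1 first). -/
noncomputable def irsChain {M : ℕ} (S Φ : ℕ → Matrix (Fin M) (Fin M) ℂ) :
    ℕ → Matrix (Fin M) (Fin M) ℂ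
  | 0 => 1
  | (j + 1) => S (j + 1) * Φ (j + 1) * irsChain S Φ j

/-- equation (11) of the paper: in the cascaded LoS channel with `K ≥ 2`
reflections and unit-modulus array responses, the co-phasing phase shifts of eq. (9)
together with the MRT beamformer `w = e^{i2πD/λ} h̃_1/‖h̃_1‖` achieve
`|h|² = M^{2K} N β^{K+1} / (d_0² d_K² ∏_{k=1}^{K-1} d_k²)`. -/
theorem stmt5 (M N K : ℕ) (hM : 0 < M) (hN : 0 < N) (hK : 2 ≤ K)
    (lam β : ℝ) (hlam : 0 < lam) (hβ : 0 < β)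
    (d : ℕ → ℝ) (hd : ∀ k ≤ K, 0 < d k)
    (h1 : Fin N → ℂ) (h2 : Fin M → ℂ) (s1 s2 : ℕ → Fin M → ℂ) (gt : Fin M → ℂ)
    (hu1 : ∀ j, ‖h1 j‖ = 1) (hu2 : ∀ i, ‖h2 i‖ = 1)
    (hus1 : ∀ k i, ‖s1 k i‖ = 1) (hus2 : ∀ k i, ‖s2 k i‖ = 1)
    (hug : ∀ i, ‖gt i‖ = 1)
    (H1 : Matrix (Fin M) (Fin N) ℂ)
    (hH1 : H1 = Matrix.of fun i j =>
      ((Real.sqrt β / d 0 : ℝ) : ℂ) * Complex.exp (-(((2 * Real.pi * d 0 / lam : ℝ) : ℂ) * Complex.I)) *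
        h2 i * (starRingEnd ℂ) (h1 j))
    (S : ℕ → Matrix (Fin M) (Fin M) ℂ)
    (hS : ∀ k, S k = Matrix.of fun i j =>
      ((Real.sqrt β / d k : ℝ) : ℂ) * Complex.exp (-(((2 * Real.pi * d k / lam : ℝ) : ℂ) * Complex.I)) *
        s2 k i * (starRingEnd ℂ) (s1 k j))
    (gH : Fin M → ℂ)
    (hgH : gH = fun i =>
      ((Real.sqrt β / d K : ℝ) : ℂ) * Complex.exp (-(((2 * Real.pi * d K / lam : ℝ) : ℂ) * Complex.I)) *
        (starRingEnd ℂ) (gt i))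
    -- co-phasing phase shifts of equation (9)
    (θ : ℕ → Fin M → ℝ)
    (hθ1 : ∀ i, θ 1 i = (s1 1 i).arg - (h2 i).arg)
    (hθK : ∀ i, θ K i = (gt i).arg - (s2 (K - 1) i).arg)
    (hθmid : ∀ k, 2 ≤ k → k ≤ K - 1 → ∀ i, θ k i = (s1 k i).arg - (s2 (k - 1) i).arg)
    (Φ : ℕ → Matrix (Fin M) (Fin M) ℂ)
    (hΦ : ∀ k, Φ k = Matrix.diagonal fun i => Complex.exp ((θ k i : ℂ) * Complex.I))
    -- MRT active beamformer of equation (10): w = e^{i2πD/λ} h̃_1/‖h̃_1‖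
    (w : Fin N → ℂ)
    (hw : w = fun j =>
      Complex.exp (((2 * Real.pi * (∑ k ∈ Finset.range (K + 1), d k) / lam : ℝ) : ℂ) * Complex.I) *
        h1 j / ((Real.sqrt (∑ j', ‖h1 j'‖ ^ 2) : ℝ) : ℂ)) :
    ‖gH ⬝ᵥ ((Φ K * irsChain S Φ (K - 1) * H1) *ᵥ w)‖ ^ 2 =
      (M : ℝ) ^ (2 * K) * (N : ℝ) * β ^ (K + 1) /
        (d 0 ^ 2 * d K ^ 2 * ∏ k ∈ Finset.Icc 1 (K - 1), d k ^ 2) := by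
  obtain ⟨c, hc⟩ : ∃ c : ℕ → ℂ, ∀ k, c k =
      ((Real.sqrt β / d k : ℝ) : ℂ) *
        Complex.exp (-(((2 * Real.pi * d k / lam : ℝ) : ℂ) * Complex.I)) := ⟨_, fun _ => rfl⟩
  obtain ⟨E, hE⟩ : ∃ E : ℂ, E =
      Complex.exp (((2 * Real.pi * (∑ k ∈ Finset.range (K + 1), d k) / lam : ℝ) : ℂ) *
        Complex.I) := ⟨_, rfl⟩
  obtain ⟨A, hA⟩ : ∃ A : ℕ → ℂ, ∀ j, A j =
      c 0 * E * ((Real.sqrt N : ℝ) : ℂ) * ∏ k ∈ Finset.Icc 1 j, (c k * (M : ℂ)) :=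
    ⟨_, fun _ => rfl⟩
  -- the reflection step
  have hMv : ∀ (k : ℕ) (b : Fin M → ℂ) (a : ℂ),
      (∀ i, Complex.exp (((θ k i : ℝ) : ℂ) * Complex.I) * b i = s1 k i) →
      ((S k * Φ k) *ᵥ fun i => a * b i) = fun i => (a * (c k * (M : ℂ))) * s2 k i := by
    intro k b a hb
    have hΦv : (Φ k *ᵥ fun i => a * b i) = fun i => a * s1 k i := by
      funext i
      rw [hΦ k, Matrix.mulVec_diagonal, ← hb i]; ring
    have hSv : (S k *ᵥ fun i => a * s1 k i) = fun i => (a * (c k * (M : ℂ))) * s2 k i := by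
      funext i
      rw [hS k]
      simp only [Matrix.mulVec, dotProduct, Matrix.of_apply]
      have hterm : ∀ j : Fin M,
          ((Real.sqrt β / d k : ℝ) : ℂ) *
              Complex.exp (-(((2 * Real.pi * d k / lam : ℝ) : ℂ) * Complex.I)) * s2 k i *
              (starRingEnd ℂ) (s1 k j) * (a * s1 k j) = c k * s2 k i * a := by
        intro j
        calc ((Real.sqrt β / d k : ℝ) : ℂ) *
              Complex.exp (-(((2 * Real.pi * d k / lam : ℝ) : ℂ) * Complex.I)) * s2 k i *
              (starRingEnd ℂ) (s1 k j) * (a * s1 k j)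
            = (c k * s2 k i * a) * ((starRingEnd ℂ) (s1 k j) * s1 k j) := by rw [hc]; ring
          _ = c k * s2 k i * a := by rw [conj_mul_self_of_abs_one (hus1 k j), mul_one]
      rw [Finset.sum_congr rfl fun j _ => hterm j, Finset.sum_const, Finset.card_univ,
        Fintype.card_fin, nsmul_eq_mul]
      ring
    rw [← Matrix.mulVec_mulVec, hΦv, hSv]
  -- the BS beamforming step
  have hH1w : H1 *ᵥ w = fun i => (c 0 * E * ((Real.sqrt N : ℝ) : ℂ)) * h2 i := by
    have hNsum : (∑ j' : Fin N, ‖h1 j'‖ ^ 2) = (N : ℝ) := by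
      simp [hu1]
    have hsqN : ((Real.sqrt N : ℝ) : ℂ) * ((Real.sqrt N : ℝ) : ℂ) = (N : ℂ) := by
      rw [← Complex.ofReal_mul, Real.mul_self_sqrt (Nat.cast_nonneg N)]
      norm_num
    have hsqN0 : ((Real.sqrt N : ℝ) : ℂ) ≠ 0 := by
      simp only [ne_eq, Complex.ofReal_eq_zero]
      positivity
    funext i
    rw [hH1, hw]
    simp only [Matrix.mulVec, dotProduct, Matrix.of_apply, hNsum]
    have hterm : ∀ j : Fin N,
        ((Real.sqrt β / d 0 : ℝ) : ℂ) *
            Complex.exp (-(((2 * Real.pi * d 0 / lam : ℝ) : ℂ) * Complex.I)) * h2 i *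
            (starRingEnd ℂ) (h1 j) *
            (Complex.exp (((2 * Real.pi * (∑ k ∈ Finset.range (K + 1), d k) / lam : ℝ) : ℂ) *
              Complex.I) * h1 j / ((Real.sqrt N : ℝ) : ℂ)) =
          c 0 * E * h2 i / ((Real.sqrt N : ℝ) : ℂ) := by
      intro j
      calc ((Real.sqrt β / d 0 : ℝ) : ℂ) *
            Complex.exp (-(((2 * Real.pi * d 0 / lam : ℝ) : ℂ) * Complex.I)) * h2 i *
            (starRingEnd ℂ) (h1 j) *
            (Complex.exp (((2 * Real.pi * (∑ k ∈ Finset.range (K + 1), d k) / lam : ℝ) : ℂ) *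
              Complex.I) * h1 j / ((Real.sqrt N : ℝ) : ℂ))
          = (c 0 * E * h2 i / ((Real.sqrt N : ℝ) : ℂ)) * ((starRingEnd ℂ) (h1 j) * h1 j) := by
            rw [hc, hE]; ring
        _ = _ := by rw [conj_mul_self_of_abs_one (hu1 j), mul_one]
    rw [Finset.sum_congr rfl fun j _ => hterm j, Finset.sum_const, Finset.card_univ,
      Fintype.card_fin, nsmul_eq_mul]
    rw [show ((N : ℕ) : ℂ) = ((Real.sqrt N : ℝ) : ℂ) * ((Real.sqrt N : ℝ) : ℂ) from hsqN.symm]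
    field_simp
  -- the inductive chain
  have hkey : ∀ j, 1 ≤ j → j ≤ K - 1 →
      ((irsChain S Φ j * H1) *ᵥ w) = fun i => A j * s2 j i := by
    intro j hj
    induction j, hj using Nat.le_induction with
    | base =>
      intro _
      have hchain : irsChain S Φ 1 = S 1 * Φ 1 := by
        show S 1 * Φ 1 * irsChain S Φ 0 = _
        show S 1 * Φ 1 * 1 = _
        rw [mul_one]
      rw [hchain, ← Matrix.mulVec_mulVec, hH1w,
        hMv 1 h2 (c 0 * E * ((Real.sqrt N : ℝ) : ℂ))
          (fun i => by rw [hθ1 i]; exact cophase (hus1 1 i) (hu2 i))]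
      funext i
      rw [hA]
      rw [show Finset.Icc 1 1 = {1} by rfl, Finset.prod_singleton]
    | succ n hn ih =>
      intro hn1
      have ihv := ih (by omega)
      have hchain : irsChain S Φ (n + 1) = S (n + 1) * Φ (n + 1) * irsChain S Φ n := rfl
      rw [hchain, Matrix.mul_assoc, ← Matrix.mulVec_mulVec, ihv,
        hMv (n + 1) (s2 n) (A n)
          (fun i => by
            rw [hθmid (n + 1) (by omega) hn1 i]
            have h := cophase (hus1 (n + 1) i) (hus2 ((n + 1) - 1) i)
            simpa using h)]
      funext i
      rw [hA, hA, Finset.prod_Icc_succ_top (by omega : 1 ≤ n + 1)]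
      ring
  -- final scalar
  have hT : gH ⬝ᵥ ((Φ K * irsChain S Φ (K - 1) * H1) *ᵥ w) = (M : ℂ) * (c K * A (K - 1)) := by
    rw [Matrix.mul_assoc, ← Matrix.mulVec_mulVec, hkey (K - 1) (by omega) le_rfl]
    have hΦK : (Φ K *ᵥ fun i => A (K - 1) * s2 (K - 1) i) = fun i => A (K - 1) * gt i := by
      funext i
      rw [hΦ K, Matrix.mulVec_diagonal, ← cophase (hug i) (hus2 (K - 1) i), ← hθK i]
      ring
    rw [hΦK, hgH]
    simp only [dotProduct]
    have hterm : ∀ i : Fin M,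
        ((Real.sqrt β / d K : ℝ) : ℂ) *
            Complex.exp (-(((2 * Real.pi * d K / lam : ℝ) : ℂ) * Complex.I)) *
            (starRingEnd ℂ) (gt i) * (A (K - 1) * gt i) = c K * A (K - 1) := by
      intro i
      calc ((Real.sqrt β / d K : ℝ) : ℂ) *
            Complex.exp (-(((2 * Real.pi * d K / lam : ℝ) : ℂ) * Complex.I)) *
            (starRingEnd ℂ) (gt i) * (A (K - 1) * gt i)
          = (c K * A (K - 1)) * ((starRingEnd ℂ) (gt i) * gt i) := by rw [hc]; ring
        _ = c K * A (K - 1) := by rw [conj_mul_self_of_abs_one (hug i), mul_one]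
    rw [Finset.sum_congr rfl fun i _ => hterm i, Finset.sum_const, Finset.card_univ,
      Fintype.card_fin, nsmul_eq_mul]
  rw [hT]
  -- absolute values
  have habsc : ∀ k, ‖c k‖ = Real.sqrt β / |d k| := by
    intro k
    rw [hc, norm_mul, Complex.norm_real, Complex.norm_exp]
    simp [abs_div, _root_.abs_of_nonneg (Real.sqrt_nonneg β)]
  have habscK : ∀ k, k ≤ K → ‖c k‖ = Real.sqrt β / d k := by
    intro k hk
    rw [habsc k, abs_of_pos (hd k hk)]
  have habsE : ‖E‖ = 1 := by
    rw [hE, Complex.norm_exp]; simp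
  have habsA : ‖A (K - 1)‖ =
      Real.sqrt β / d 0 * Real.sqrt N * ∏ k ∈ Finset.Icc 1 (K - 1), (Real.sqrt β / d k * M) := by
    rw [hA, norm_mul, norm_mul, norm_mul, norm_prod, habsE, habscK 0 (by omega),
      Complex.norm_real, Real.norm_eq_abs, _root_.abs_of_nonneg (Real.sqrt_nonneg _)]
    rw [mul_one]
    congr 1
    refine Finset.prod_congr rfl fun k hk => ?_
    rw [Finset.mem_Icc] at hk
    rw [norm_mul, habscK k (by omega), Complex.norm_natCast]
  rw [norm_mul, norm_mul, Complex.norm_natCast, habscK K le_rfl, habsA]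
  -- final real arithmetic
  obtain ⟨K', rfl⟩ : ∃ K', K = K' + 2 := ⟨K - 2, by omega⟩
  have hK1 : K' + 2 - 1 = K' + 1 := by omega
  rw [hK1]
  have hP2 : (∏ k ∈ Finset.Icc 1 (K' + 1), (Real.sqrt β / d k * M)) ^ 2 =
      (β * (M : ℝ) ^ 2) ^ (K' + 1) / ∏ k ∈ Finset.Icc 1 (K' + 1), d k ^ 2 := by
    rw [← Finset.prod_pow]
    rw [Finset.prod_congr rfl fun k hk => show (Real.sqrt β / d k * M) ^ 2 = (β * (M:ℝ)^2) / d k ^ 2 by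
      rw [mul_pow, div_pow, Real.sq_sqrt hβ.le]; ring]
    rw [Finset.prod_div_distrib, Finset.prod_const, Nat.card_Icc]
    norm_num
  have hd0 : d 0 ≠ 0 := (hd 0 (by omega)).ne'
  have hdK : d (K' + 2) ≠ 0 := (hd (K' + 2) le_rfl).ne'
  have hQ : (∏ k ∈ Finset.Icc 1 (K' + 1), d k ^ 2) ≠ 0 := by
    refine Finset.prod_ne_zero_iff.mpr fun k hk => ?_
    rw [Finset.mem_Icc] at hk
    exact pow_ne_zero 2 (hd k (by omega)).ne'
  rw [mul_pow, mul_pow, mul_pow, mul_pow, div_pow, div_pow, Real.sq_sqrt hβ.le,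
    Real.sq_sqrt (Nat.cast_nonneg N), hP2]
  field_simp
  ring
end

section
/- In the setting of the cascaded LoS channel with K ≥ 2 reflections and all array-response vectors having unit-modulus entries, for EVERY choice of diagonal phase-shift matrices Φ_k = diag(e^{iθ_{k,1}},…,e^{iθ_{k,M}}) with arbitrary real θ_{k,m}, and every w ∈ ℂ^N with ‖w‖ = 1, the end-to-end channel h = gᴴ Φ_K (∏_{k=K−1}^{1} S_k Φ_k) H_1 w satisfies |h|² ≤ M^{2K} · N · β^{K+1} / (d_0² d_K² ∏_{k=1}^{K−1} d_k²). Hence the design of equations (9)–(10) attains the maximum channel power M^{2K} N κ²(Ω). -/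
open Matrix Finset Complex

lemma absExpRealMulI (r : ℝ) : ‖(Complex.exp (-((r : ℂ) * Complex.I)))‖ = 1 := by
  rw [show -((r : ℂ) * Complex.I) = ((-r : ℝ) : ℂ) * Complex.I by push_cast; ring]
  exact Complex.norm_exp_ofReal_mul_I _

/-- in the cascaded LoS channel with `K ≥ 2` reflections and unit-modulus
array responses, for EVERY choice of unit-modulus diagonal phase-shift matrices
`Φ_k = diag(e^{iθ_{k,1}},…,e^{iθ_{k,M}})` and every unit-norm `w`, the end-to-end channel
satisfies `|h|² ≤ M^{2K} N β^{K+1} / (d_0² d_K² ∏_{k=1}^{K-1} d_k²) = M^{2K} N κ²(Ω)`. -/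
theorem stmt6 (M N K : ℕ) (hM : 0 < M) (hN : 0 < N) (hK : 2 ≤ K)
    (lam β : ℝ) (hlam : 0 < lam) (hβ : 0 < β)
    (d : ℕ → ℝ) (hd : ∀ k ≤ K, 0 < d k)
    (h1 : Fin N → ℂ) (h2 : Fin M → ℂ) (s1 s2 : ℕ → Fin M → ℂ) (gt : Fin M → ℂ)
    (hu1 : ∀ j, norm (h1 j) = 1) (hu2 : ∀ i, norm (h2 i) = 1)
    (hus1 : ∀ k i, norm (s1 k i) = 1) (hus2 : ∀ k i, norm (s2 k i) = 1)
    (hug : ∀ i, norm (gt i) = 1)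
    (H1 : Matrix (Fin M) (Fin N) ℂ)
    (hH1 : H1 = Matrix.of fun i j =>
      ((Real.sqrt β / d 0 : ℝ) : ℂ) * Complex.exp (-(((2 * Real.pi * d 0 / lam : ℝ) : ℂ) * Complex.I)) *
        h2 i * (starRingEnd ℂ) (h1 j))
    (S : ℕ → Matrix (Fin M) (Fin M) ℂ)
    (hS : ∀ k, S k = Matrix.of fun i j =>
      ((Real.sqrt β / d k : ℝ) : ℂ) * Complex.exp (-(((2 * Real.pi * d k / lam : ℝ) : ℂ) * Complex.I)) *
        s2 k i * (starRingEnd ℂ) (s1 k j))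
    (gH : Fin M → ℂ)
    (hgH : gH = fun i =>
      ((Real.sqrt β / d K : ℝ) : ℂ) * Complex.exp (-(((2 * Real.pi * d K / lam : ℝ) : ℂ) * Complex.I)) *
        (starRingEnd ℂ) (gt i)) :
    ∀ (θ : ℕ → Fin M → ℝ) (w : Fin N → ℂ), (∑ j, norm (w j) ^ 2 = 1) →
      norm (gH ⬝ᵥ
        (((Matrix.diagonal fun i => Complex.exp ((θ K i : ℂ) * Complex.I)) *
          irsChain S (fun k => Matrix.diagonal fun i => Complex.exp ((θ k i : ℂ) * Complex.I)) (K - 1) *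
          H1) *ᵥ w)) ^ 2 ≤
        (M : ℝ) ^ (2 * K) * (N : ℝ) * β ^ (K + 1) /
          (d 0 ^ 2 * d K ^ 2 * ∏ k ∈ Finset.Icc 1 (K - 1), d k ^ 2) := by
  intro θ w hw
  set Φ : ℕ → Matrix (Fin M) (Fin M) ℂ :=
    fun k => Matrix.diagonal fun i => Complex.exp ((θ k i : ℂ) * Complex.I) with hΦ
  have hsb : (0:ℝ) ≤ Real.sqrt β := Real.sqrt_nonneg _
  have hd0 : 0 < d 0 := hd 0 (by omega)
  have hdK : 0 < d K := hd K le_rfl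
  -- sum of |w j| is at most √N
  have hwsum : ∑ j, ‖w j‖ ≤ Real.sqrt N := by
    rw [Real.le_sqrt (by positivity) (by positivity)]
    calc (∑ j, ‖w j‖) ^ 2
        ≤ (Finset.univ.card : ℝ) * ∑ j, ‖w j‖ ^ 2 :=
          sq_sum_le_card_mul_sum_sq
      _ = N := by rw [hw]; simp
  -- bound on the entries of H1 *ᵥ w
  have hv0 : ∀ i, ‖(H1 *ᵥ w) i‖ ≤ Real.sqrt β / d 0 * Real.sqrt N := by
    intro i
    have : (H1 *ᵥ w) i = ∑ j, H1 i j * w j := rfl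
    rw [this]
    calc ‖∑ j, H1 i j * w j‖ ≤ ∑ j, ‖H1 i j * w j‖ :=
          norm_sum_le _ _
      _ = ∑ j, Real.sqrt β / d 0 * ‖w j‖ := by
          refine Finset.sum_congr rfl fun j _ => ?_
          rw [hH1]
          simp only [Matrix.of_apply, norm_mul, Complex.norm_real, Real.norm_eq_abs, Complex.norm_conj,
            absExpRealMulI, hu1, hu2]
          rw [show |Real.sqrt β / d 0| = Real.sqrt β / d 0 from abs_of_nonneg (by positivity)]; ring
      _ = Real.sqrt β / d 0 * ∑ j, ‖w j‖ := by rw [Finset.mul_sum]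
      _ ≤ Real.sqrt β / d 0 * Real.sqrt N := by
          apply mul_le_mul_of_nonneg_left hwsum (by positivity)
  -- chain bound
  have key : ∀ j, j ≤ K → ∀ (v : Fin M → ℂ) (B : ℝ), (∀ i, ‖v i‖ ≤ B) →
      ∀ i, ‖(irsChain S Φ j *ᵥ v) i‖ ≤
        (∏ k ∈ Finset.Icc 1 j, (Real.sqrt β * M / d k)) * B := by
    intro j
    induction j with
    | zero =>
        intro _ v B hB i
        simpa [irsChain, Matrix.one_mulVec] using hB i
    | succ j ih =>
        intro hj v B hB i
        have hdj : 0 < d (j + 1) := hd _ hj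
        have hBj := ih (by omega) v B hB
        set u : Fin M → ℂ := irsChain S Φ j *ᵥ v with hu
        set Bj : ℝ := (∏ k ∈ Finset.Icc 1 j, (Real.sqrt β * M / d k)) * B with hBjdef
        have hBjnn : ∀ t, ‖(Φ (j+1) *ᵥ u) t‖ ≤ Bj := by
          intro t
          rw [hΦ]
          simp only [Matrix.mulVec_diagonal, norm_mul, Complex.norm_exp_ofReal_mul_I, one_mul]
          exact hBj t
        have hstep : (irsChain S Φ (j+1) *ᵥ v) i =
            (S (j+1) *ᵥ (Φ (j+1) *ᵥ u)) i := by
          rw [hu, Matrix.mulVec_mulVec, Matrix.mulVec_mulVec]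
          rfl
        rw [hstep]
        have : (S (j+1) *ᵥ (Φ (j+1) *ᵥ u)) i = ∑ t, S (j+1) i t * (Φ (j+1) *ᵥ u) t := rfl
        rw [this]
        calc ‖∑ t, S (j+1) i t * (Φ (j+1) *ᵥ u) t‖
            ≤ ∑ t, ‖S (j+1) i t * (Φ (j+1) *ᵥ u) t‖ :=
              norm_sum_le _ _
          _ ≤ ∑ _t : Fin M, Real.sqrt β / d (j+1) * Bj := by
              refine Finset.sum_le_sum fun t _ => ?_
              rw [hS]
              simp only [Matrix.of_apply, norm_mul, Complex.norm_real, Real.norm_eq_abs, Complex.norm_conj,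
                absExpRealMulI, hus1, hus2]
              rw [show |Real.sqrt β / d (j+1)| = Real.sqrt β / d (j+1) from
                abs_of_nonneg (by positivity)]
              simp only [mul_one, one_mul]
              exact mul_le_mul_of_nonneg_left (hBjnn t) (by positivity)
          _ = (Real.sqrt β * M / d (j+1)) * Bj := by
              rw [Finset.sum_const]
              simp [Finset.card_univ]
              ring
          _ = (∏ k ∈ Finset.Icc 1 (j+1), (Real.sqrt β * M / d k)) * B := by
              rw [Finset.prod_Icc_succ_top (by omega)]
              rw [hBjdef]; ring
  -- combine
  obtain ⟨K', rfl⟩ : ∃ K', K = K' + 1 := ⟨K - 1, by omega⟩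
  simp only [Nat.add_sub_cancel]
  have hchain := key K' (by omega) (H1 *ᵥ w) (Real.sqrt β / d 0 * Real.sqrt N) hv0
  set B1 : ℝ := (∏ k ∈ Finset.Icc 1 K', (Real.sqrt β * M / d k)) *
      (Real.sqrt β / d 0 * Real.sqrt N) with hB1
  have hfin : ‖gH ⬝ᵥ ((Φ (K'+1) * irsChain S Φ K' * H1) *ᵥ w)‖ ≤
      Real.sqrt β / d (K'+1) * M * B1 := by
    have hmv : (Φ (K'+1) * irsChain S Φ K' * H1) *ᵥ w =
        Φ (K'+1) *ᵥ (irsChain S Φ K' *ᵥ (H1 *ᵥ w)) := by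
      rw [Matrix.mulVec_mulVec, Matrix.mulVec_mulVec]
    rw [hmv]
    have hdot : gH ⬝ᵥ (Φ (K'+1) *ᵥ (irsChain S Φ K' *ᵥ (H1 *ᵥ w))) =
        ∑ t, gH t * (Φ (K'+1) *ᵥ (irsChain S Φ K' *ᵥ (H1 *ᵥ w))) t := rfl
    rw [hdot]
    calc ‖∑ t, gH t * (Φ (K'+1) *ᵥ (irsChain S Φ K' *ᵥ (H1 *ᵥ w))) t‖
        ≤ ∑ t, ‖gH t * (Φ (K'+1) *ᵥ (irsChain S Φ K' *ᵥ (H1 *ᵥ w))) t‖ :=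
          norm_sum_le _ _
      _ ≤ ∑ _t : Fin M, Real.sqrt β / d (K'+1) * B1 := by
          refine Finset.sum_le_sum fun t _ => ?_
          rw [hgH, hΦ]
          simp only [Matrix.mulVec_diagonal, norm_mul, Complex.norm_real, Real.norm_eq_abs, Complex.norm_conj,
            absExpRealMulI, Complex.norm_exp_ofReal_mul_I, hug]
          rw [show |Real.sqrt β / d (K'+1)| = Real.sqrt β / d (K'+1) from
            abs_of_nonneg (by positivity)]
          simp only [mul_one, one_mul]
          exact mul_le_mul_of_nonneg_left (hchain t) (by positivity)
      _ = Real.sqrt β / d (K'+1) * M * B1 := by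
          rw [Finset.sum_const]
          simp [Finset.card_univ]
          ring
  have habs : (0:ℝ) ≤ ‖gH ⬝ᵥ ((Φ (K'+1) * irsChain S Φ K' * H1) *ᵥ w)‖ :=
    norm_nonneg _
  calc ‖gH ⬝ᵥ ((Φ (K'+1) * irsChain S Φ K' * H1) *ᵥ w)‖ ^ 2
      ≤ (Real.sqrt β / d (K'+1) * M * B1) ^ 2 := pow_le_pow_left₀ habs hfin 2
    _ = (M : ℝ) ^ (2 * (K'+1)) * (N : ℝ) * β ^ ((K'+1) + 1) /
          (d 0 ^ 2 * d (K'+1) ^ 2 * ∏ k ∈ Finset.Icc 1 K', d k ^ 2) := by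
        have hP : ∀ k ∈ Finset.Icc 1 K', d k ≠ 0 := fun k hk => by
          have := hd k (by simp at hk; omega); positivity
        have hprod : (∏ k ∈ Finset.Icc 1 K', (Real.sqrt β * M / d k)) =
            (Real.sqrt β * M) ^ K' / ∏ k ∈ Finset.Icc 1 K', d k := by
          rw [Finset.prod_div_distrib, Finset.prod_const, Nat.card_Icc]
          simp
        have hProdpos : 0 < ∏ k ∈ Finset.Icc 1 K', d k :=
          Finset.prod_pos fun k hk => hd k (by simp at hk; omega)
        have hsq : Real.sqrt β ^ 2 = β := Real.sq_sqrt hβ.le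
        have hsqN : Real.sqrt N ^ 2 = (N : ℝ) := Real.sq_sqrt (by positivity)
        have hprodsq : (∏ k ∈ Finset.Icc 1 K', d k) ^ 2 =
            ∏ k ∈ Finset.Icc 1 K', d k ^ 2 := by
          rw [← Finset.prod_pow]
        rw [hB1, hprod, ← hprodsq, ← hsq, ← hsqN]
        have hne0 : d 0 ≠ 0 := hd0.ne'
        have hneK : d (K'+1) ≠ 0 := hdK.ne'
        have hPne : (∏ k ∈ Finset.Icc 1 K', d k) ≠ 0 := hProdpos.ne'
        field_simp
        ring_nf
        rw [show Real.sqrt β ^ 4 = β ^ 2 by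
              rw [show (4:ℕ) = 2*2 from rfl, pow_mul, hsq],
            show Real.sqrt β ^ (K'*2) = β ^ K' by rw [mul_comm, pow_mul, hsq], hsqN]
        simp only [Real.sqrt_sq hsb]
        rw [show Real.sqrt β ^ 4 = β ^ 2 by
              rw [show (4:ℕ) = 2*2 from rfl, pow_mul, hsq],
            show Real.sqrt β ^ (K'*2) = β ^ K' by rw [mul_comm, pow_mul, hsq], hsqN]
end
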